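/- Let Λ = Z_p[[X]] and let M be a finitely generated Λ-module. Suppose that multiplication by X is injective on M and that multiplication by p is injective on M/XM. Then M is a free Λ-module of finite rank. -/

import Mathlib

open PowerSeries

/-- Division by `X` on power series (dropping the constant coefficient). -/
noncomputable def pdivX {R : Type*} [CommRing R] (f : PowerSeries R) : PowerSeries R :=
  PowerSeries.mk fun n => PowerSeries.coeff (n + 1) f

theorem pdivX_zero {R : Type*} [CommRing R] : pdivX (0 : PowerSeries R) = 0 := by
  ext n; simp [pdivX]

theorem X_mul_pdivX {R : Type*} [CommRing R] (f : PowerSeries R)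
    (h : PowerSeries.constantCoeff f = 0) : PowerSeries.X * pdivX f = f := by
  ext n
  cases n with
  | zero => simpa [PowerSeries.coeff_zero_X_mul] using h.symm
  | succ n => simp [PowerSeries.coeff_succ_X_mul, pdivX]

set_option maxHeartbeats 1600000 in
/-- Let `Λ = ℤ_p⟦X⟧` and let `M` be a finitely generated `Λ`-module.  If
multiplication by `X` is injective on `M` and multiplication by `p` is injective
on `M/XM`, then `M` is a free `Λ`-module. -/
theorem free_of_X_injective_and_p_injective_mod_X (p : ℕ) [Fact p.Prime]
    (M : Type*) [AddCommGroup M] [Module (PowerSeries ℤ_[p]) M]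
    [Module.Finite (PowerSeries ℤ_[p]) M]
    (hX : Function.Injective fun m : M => (PowerSeries.X : PowerSeries ℤ_[p]) • m)
    (hp : Function.Injective fun m : M ⧸ (Ideal.span {(PowerSeries.X : PowerSeries ℤ_[p])} •
        (⊤ : Submodule (PowerSeries ℤ_[p]) M)) => ((p : PowerSeries ℤ_[p])) • m) :
    Module.Free (PowerSeries ℤ_[p]) M := by
  classical
  set Λ := PowerSeries ℤ_[p] with hΛ
  set I : Ideal Λ := Ideal.span {(PowerSeries.X : Λ)} with hI
  set P : Submodule Λ M := I • ⊤ with hP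
  let N := M ⧸ P
  let π : M →ₗ[Λ] N := P.mkQ
  letI : Module ℤ_[p] N := Module.compHom N (algebraMap ℤ_[p] Λ)
  have smul_def : ∀ (c : ℤ_[p]) (x : N), c • x = (algebraMap ℤ_[p] Λ c) • x :=
    fun c x => rfl
  haveI : IsScalarTower ℤ_[p] Λ N := ⟨fun c f x => by
    rw [smul_def, Algebra.smul_def, mul_smul]⟩
  have hXinj : ∀ y : M, (PowerSeries.X : Λ) • y = 0 → y = 0 := by
    intro y hy
    have h' : (fun m : M => (PowerSeries.X : Λ) • m) y
        = (fun m : M => (PowerSeries.X : Λ) • m) 0 := by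
      show (PowerSeries.X : Λ) • y = (PowerSeries.X : Λ) • (0 : M)
      rw [smul_zero, hy]
    exact hX h'
  -- X kills everything in N
  have hXzero : ∀ y : N, (PowerSeries.X : Λ) • y = 0 := by
    intro y
    obtain ⟨m, rfl⟩ := Submodule.mkQ_surjective P y
    show P.mkQ ((PowerSeries.X : Λ) • m) = 0
    rw [Submodule.mkQ_apply, Submodule.Quotient.mk_eq_zero]
    exact Submodule.smul_mem_smul (Ideal.subset_span rfl) trivial
  -- the Λ-action on N factors through constant coefficients
  have smul_quot : ∀ (f : Λ) (x : N),
      f • x = ((PowerSeries.constantCoeff (R := ℤ_[p])) f) • x := by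
    intro f x
    rw [smul_def]
    have hdvd : (PowerSeries.X : Λ) ∣
        (f - algebraMap ℤ_[p] Λ ((PowerSeries.constantCoeff (R := ℤ_[p])) f)) := by
      rw [PowerSeries.X_dvd_iff, map_sub, sub_eq_zero]
      rw [PowerSeries.algebraMap_apply]
      simp
    obtain ⟨g, hg⟩ := hdvd
    have h2 : f • x - algebraMap ℤ_[p] Λ ((PowerSeries.constantCoeff (R := ℤ_[p])) f) • x
        = (PowerSeries.X * g) • x := by rw [← sub_smul, ← hg]
    rw [mul_smul, hXzero] at h2
    exact sub_eq_zero.mp h2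
  -- a ℤ_p-submodule of N is automatically a Λ-submodule
  have toLambda : ∀ T : Submodule ℤ_[p] N, ∃ T' : Submodule Λ N, ∀ x : N, x ∈ T' ↔ x ∈ T := by
    intro T
    exact ⟨{ carrier := T
             add_mem' := fun ha hb => T.add_mem ha hb
             zero_mem' := T.zero_mem
             smul_mem' := fun f x hx => by
               show f • x ∈ T
               rw [smul_quot]
               exact T.smul_mem _ hx }, fun x => Iff.rfl⟩
  -- N is finitely generated over ℤ_p
  haveI : Module.Finite ℤ_[p] N := by
    obtain ⟨s, hs⟩ := Module.Finite.fg_top (R := Λ) (M := M)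
    refine ⟨(Submodule.fg_def).mpr ⟨π '' s, (Set.Finite.image _ s.finite_toSet), ?_⟩⟩
    obtain ⟨T', hT'⟩ := toLambda (Submodule.span ℤ_[p] (π '' ↑s))
    have h1 : Submodule.span Λ (π '' ↑s) = ⊤ := by
      rw [← Submodule.map_span, hs, Submodule.map_top, Submodule.range_mkQ]
    have h2 : Submodule.span Λ (π '' ↑s) ≤ T' :=
      Submodule.span_le.mpr fun x hx => (hT' x).mpr (Submodule.subset_span hx)
    rw [eq_top_iff]
    intro x _
    have hx : x ∈ Submodule.span Λ (π '' ↑s) := by rw [h1]; trivial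
    exact (hT' x).mp (h2 hx)
  -- multiplication by p is injective on N over ℤ_p
  have hpN : ∀ x : N, (p : ℤ_[p]) • x = 0 → x = 0 := by
    intro x hx
    have : (p : Λ) • x = 0 := by
      rw [smul_def, map_natCast] at hx; exact hx
    have h0 : (p : Λ) • x = (p : Λ) • (0 : N) := by rw [this, smul_zero]
    exact hp h0
  -- N is torsion-free over ℤ_p
  haveI : NoZeroSMulDivisors ℤ_[p] N := by
    constructor
    intro c x hcx
    by_cases hc : c = 0
    · exact Or.inl hc
    · right
      obtain hspec := PadicInt.unitCoeff_spec hc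
      set u := PadicInt.unitCoeff hc
      set n := PadicInt.valuation c
      have hpowzero : ∀ (m : ℕ) (y : N), (p : ℤ_[p]) ^ m • y = 0 → y = 0 := by
        intro m
        induction m with
        | zero => intro y h; simpa using h
        | succ m IH =>
          intro y h
          have h1 : (p : ℤ_[p]) • ((p : ℤ_[p]) ^ m • y) = 0 := by
            rw [← mul_smul, ← pow_succ']; exact h
          exact IH y (hpN _ h1)
      have hpow : (p : ℤ_[p]) ^ n • x = 0 := by
        have h2 : ((u⁻¹ : ℤ_[p]ˣ) : ℤ_[p]) • ((((u : ℤ_[p]) * (p : ℤ_[p]) ^ n)) • x) = 0 := by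
          rw [← hspec, hcx, smul_zero]
        rw [← mul_smul, ← mul_assoc, Units.inv_mul, one_mul] at h2
        exact h2
      exact hpowzero n x hpow
  haveI : Module.Free ℤ_[p] N := Module.free_of_finite_type_torsion_free'
  -- choose a basis of N and lift it to M
  let ι := Module.Free.ChooseBasisIndex ℤ_[p] N
  let b : Module.Basis ι ℤ_[p] N := Module.Free.chooseBasis ℤ_[p] N
  choose e he using fun j : ι => Submodule.mkQ_surjective P (b j)
  let i : (ι →₀ Λ) →ₗ[Λ] M := Finsupp.linearCombination Λ e
  -- surjectivity via Nakayama
  have hsup : ⊤ ≤ Submodule.span Λ (Set.range e) ⊔ P := by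
    intro m _
    have hmem : π m ∈ Submodule.span Λ (π '' Set.range e) := by
      have h1 : π m ∈ Submodule.span ℤ_[p] (Set.range b) := by
        rw [b.span_eq]; trivial
      have h2 : Set.range b = π '' Set.range e := by
        ext y; constructor
        · rintro ⟨j, rfl⟩; exact ⟨e j, ⟨j, rfl⟩, he j⟩
        · rintro ⟨_, ⟨j, rfl⟩, rfl⟩; exact ⟨j, (he j).symm⟩
      rw [h2] at h1
      exact Submodule.span_le_restrictScalars ℤ_[p] Λ _ h1
    rw [← Submodule.map_span] at hmem
    obtain ⟨m', hm', hmm'⟩ := hmem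
    have : m - m' ∈ P := by
      rw [← Submodule.ker_mkQ P]
      simp only [LinearMap.mem_ker, map_sub]
      rw [show P.mkQ m = π m from rfl, show P.mkQ m' = π m' from rfl, hmm', sub_self]
    have hm : m = m' + (m - m') := by abel
    rw [hm]
    exact Submodule.add_mem_sup hm' this
  have hjac : I ≤ Ideal.jacobson ⊥ := by
    rw [IsLocalRing.jacobson_eq_maximalIdeal ⊥ bot_ne_top]
    rw [hI, Ideal.span_le]
    rintro _ rfl
    show PowerSeries.X ∈ IsLocalRing.maximalIdeal Λ
    rw [IsLocalRing.mem_maximalIdeal]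
    intro hu
    rw [PowerSeries.isUnit_iff_constantCoeff] at hu
    simp at hu
  have hPle : P ≤ Submodule.span Λ (Set.range e) := by
    rw [hP]
    exact Submodule.smul_le_of_le_smul_of_le_jacobson_bot
      (Module.Finite.fg_top (R := Λ) (M := M)) hjac hsup
  have hspan : Submodule.span Λ (Set.range e) = ⊤ :=
    eq_top_iff.mpr (le_trans hsup (sup_le le_rfl hPle))
  have hisurj : Function.Surjective i := by
    rw [← LinearMap.range_eq_top, Finsupp.range_linearCombination]
    exact hspan
  -- image of a combination in N
  have hπi : ∀ c : ι →₀ Λ, π (i c) =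
      Finsupp.linearCombination ℤ_[p] b (c.mapRange ((PowerSeries.constantCoeff (R := ℤ_[p])))
        (map_zero _)) := by
    intro c
    rw [show i c = c.sum fun j f => f • e j from rfl]
    rw [map_finsuppSum]
    have hr : (Finsupp.mapRange ((PowerSeries.constantCoeff (R := ℤ_[p]))) (map_zero _) c).sum
        (fun j a => a • b j) = c.sum fun j f => ((PowerSeries.constantCoeff (R := ℤ_[p])) f) • b j :=
      Finsupp.sum_mapRange_index (fun j => zero_smul _ _)
    rw [Finsupp.linearCombination_apply, hr]
    refine Finsupp.sum_congr fun j _ => ?_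
    rw [show π (c j • e j) = c j • π (e j) from (π.map_smul _ _)]
    rw [show π (e j) = b j from he j, smul_quot]
  -- the key step: relations are divisible by X
  have key : ∀ c : ι →₀ Λ, i c = 0 →
      (∀ j, (PowerSeries.constantCoeff (R := ℤ_[p])) (c j) = 0) ∧
      i (c.mapRange pdivX pdivX_zero) = 0 := by
    intro c hc
    have h0 : Finsupp.linearCombination ℤ_[p] b
        (c.mapRange ((PowerSeries.constantCoeff (R := ℤ_[p]))) (map_zero _)) = 0 := by
      rw [← hπi, hc, map_zero]
    have hcc : ∀ j, (PowerSeries.constantCoeff (R := ℤ_[p])) (c j) = 0 := by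
      intro j
      have := linearIndependent_iff.mp b.linearIndependent _ h0
      have := congrArg (fun l => l j) this
      simpa [Finsupp.mapRange_apply] using this
    refine ⟨hcc, ?_⟩
    apply hXinj
    rw [← i.map_smul]
    have : (PowerSeries.X : Λ) • (c.mapRange pdivX pdivX_zero) = c := by
      refine Finsupp.ext fun j => ?_
      rw [Finsupp.smul_apply, Finsupp.mapRange_apply, smul_eq_mul]
      exact X_mul_pdivX _ (hcc j)
    rw [this, hc]
  -- hence relations are divisible by all powers of X, so are zero
  have pow : ∀ (n : ℕ) (c : ι →₀ Λ), i c = 0 → ∀ j, (PowerSeries.X : Λ) ^ n ∣ c j := by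
    intro n
    induction n with
    | zero => intro c _ j; simp only [pow_zero]; exact one_dvd (c j)
    | succ n IH =>
      intro c hc j
      obtain ⟨h1, h2⟩ := key c hc
      have hd := IH _ h2 j
      rw [Finsupp.mapRange_apply] at hd
      have : c j = PowerSeries.X * pdivX (c j) := (X_mul_pdivX _ (h1 j)).symm
      rw [this, pow_succ']
      exact mul_dvd_mul_left _ hd
  have hiinj : Function.Injective i := by
    intro a b' hab
    have h0 : i (a - b') = 0 := by rw [map_sub, hab, sub_self]
    have : a - b' = 0 := by
      refine Finsupp.ext fun j => ?_
      apply PowerSeries.ext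
      intro n
      have := pow (n + 1) _ h0 j
      rw [PowerSeries.X_pow_dvd_iff] at this
      simpa using this n (Nat.lt_succ_self n)
    exact sub_eq_zero.mp this
  haveI hself : Module.Free Λ Λ := Module.Free.self Λ
  haveI hfree : Module.Free Λ (ι →₀ Λ) := Module.Free.finsupp _ _ _
  exact Module.Free.of_equiv (LinearEquiv.ofBijective i ⟨hiinj, hisurj⟩)
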